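/- Let γ ∈ ℝ with γ > 0, let a, b ∈ ℝ³ and let M be a real 3×3 matrix, satisfying the relations of a proper Lorentz matrix: ‖a‖² = γ² − 1, ‖b‖² = γ² − 1, γ·b = M·a, γ·a = Mᵀ·b, M·Mᵀ = 1₃ + b bᵀ, and Mᵀ·M = 1₃ + a aᵀ. Let L be the 4×4 block matrix with blocks [[γ, aᵀ], [b, M]], let B be the 4×4 block matrix [[γ, bᵀ], [b, 1₃ + (1/(1+γ)) b bᵀ]], set D := M − (1/(1+γ)) b aᵀ, and let R be the 4×4 block matrix [[1, 0], [0, D]]. Then: (i) L = B * R; (ii) B is symmetric positive definite; (iii) D·a = b; (iv) D·Dᵀ = 1₃; and (v) if det L = 1 then det D = 1, i.e. D ∈ SO(3). -/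

import Mathlib

open Matrix

lemma mul_vmv {n m : Type*} [Fintype m] [Fintype n] (M : Matrix n m ℝ) (u : m → ℝ) (v : m → ℝ) :
    M * vecMulVec u v = vecMulVec (M *ᵥ u) v := by
  ext i j
  simp [Matrix.mul_apply, vecMulVec_apply, Matrix.mulVec, dotProduct, Finset.sum_mul, mul_assoc]

lemma vmv_mul {n m : Type*} [Fintype m] [Fintype n] (u : n → ℝ) (v : m → ℝ) (M : Matrix m n ℝ) :
    vecMulVec u v * M = vecMulVec u (Mᵀ *ᵥ v) := by
  ext i j
  simp only [Matrix.mul_apply, vecMulVec_apply, Matrix.mulVec, dotProduct, Finset.mul_sum,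
    Matrix.transpose_apply]
  exact Finset.sum_congr rfl fun k _ => by ring

lemma vmv_mulVec {n m : Type*} [Fintype m] [Fintype n] (u : n → ℝ) (v : m → ℝ) (x : m → ℝ) :
    vecMulVec u v *ᵥ x = (v ⬝ᵥ x) • u := by
  ext i
  simp only [Matrix.mulVec, vecMulVec_apply, dotProduct, Pi.smul_apply, smul_eq_mul,
    Finset.sum_mul]
  exact Finset.sum_congr rfl fun k _ => by ring

lemma vmv_transpose {n m : Type*} (u : n → ℝ) (v : m → ℝ) :
    (vecMulVec u v)ᵀ = vecMulVec v u := by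
  ext i j; simp [vecMulVec_apply, mul_comm]

lemma vmv_smul_right (c : ℝ) {n m : Type*} (u : n → ℝ) (v : m → ℝ) :
    vecMulVec u (c • v) = c • vecMulVec u v := by
  ext i j; simp [vecMulVec_apply]; ring

lemma vmv_smul_left (c : ℝ) {n m : Type*} (u : n → ℝ) (v : m → ℝ) :
    vecMulVec (c • u) v = c • vecMulVec u v := by
  ext i j; simp [vecMulVec_apply]; ring


open Matrix in
/-- Explicit polar decomposition of a proper orthochronous Lorentz matrix
`L = [[γ, aᵀ],[b, M]]` into a boost `B` and a spatial rotation `R = diag(1, D)`,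
with `D = M - (1/(1+γ)) b aᵀ`. -/
theorem lorentz_polar_decomposition
    (γ : ℝ) (hγ : 0 < γ) (a b : Fin 3 → ℝ) (M : Matrix (Fin 3) (Fin 3) ℝ)
    (ha : ∑ i, a i * a i = γ ^ 2 - 1)
    (hb : ∑ i, b i * b i = γ ^ 2 - 1)
    (hMa : γ • b = M *ᵥ a)
    (hMtb : γ • a = Mᵀ *ᵥ b)
    (hMMt : M * Mᵀ = 1 + Matrix.vecMulVec b b)
    (hMtM : Mᵀ * M = 1 + Matrix.vecMulVec a a)
    (L B : Matrix (Unit ⊕ Fin 3) (Unit ⊕ Fin 3) ℝ)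
    (D : Matrix (Fin 3) (Fin 3) ℝ)
    (R : Matrix (Unit ⊕ Fin 3) (Unit ⊕ Fin 3) ℝ)
    (hL : L = Matrix.fromBlocks (Matrix.of fun _ _ => γ) (Matrix.of fun _ j => a j)
      (Matrix.of fun i _ => b i) M)
    (hB : B = Matrix.fromBlocks (Matrix.of fun _ _ => γ) (Matrix.of fun _ j => b j)
      (Matrix.of fun i _ => b i) (1 + (1 / (1 + γ)) • Matrix.vecMulVec b b))
    (hD : D = M - (1 / (1 + γ)) • Matrix.vecMulVec b a)
    (hR : R = Matrix.fromBlocks 1 0 0 D) :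
    L = B * R ∧ Bᵀ = B ∧ B.PosDef ∧ D *ᵥ a = b ∧ D * Dᵀ = 1 ∧
    (L.det = 1 → D.det = 1) := by
  have h0a : (0:ℝ) ≤ γ^2 - 1 := ha ▸ Finset.sum_nonneg (fun i _ => mul_self_nonneg _)
  have hγ1 : 1 ≤ γ := by nlinarith
  have h1γ : (0:ℝ) < 1 + γ := by linarith
  have hne : (1:ℝ) + γ ≠ 0 := ne_of_gt h1γ
  have haa : a ⬝ᵥ a = γ^2 - 1 := ha
  have hbb : b ⬝ᵥ b = γ^2 - 1 := hb
  -- D *ᵥ a = b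
  have hDa : D *ᵥ a = b := by
    rw [hD, Matrix.sub_mulVec, Matrix.smul_mulVec, vmv_mulVec, haa, ← hMa, smul_smul,
      ← sub_smul, show γ - 1/(1+γ)*(γ^2-1) = 1 from by field_simp; ring, one_smul]
  have hDt : Dᵀ = Mᵀ - (1/(1+γ)) • vecMulVec a b := by
    rw [hD, Matrix.transpose_sub, Matrix.transpose_smul, vmv_transpose]
  have hDtb : Dᵀ *ᵥ b = a := by
    rw [hDt, Matrix.sub_mulVec, Matrix.smul_mulVec, vmv_mulVec, hbb, ← hMtb, smul_smul,
      ← sub_smul, show γ - 1/(1+γ)*(γ^2-1) = 1 from by field_simp; ring, one_smul]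
  -- D * Dᵀ = 1
  have hDDt : D * Dᵀ = 1 := by
    rw [hDt, hD, Matrix.sub_mul, Matrix.mul_sub, Matrix.mul_sub, Matrix.smul_mul,
      Matrix.smul_mul, Matrix.mul_smul, Matrix.mul_smul, mul_vmv, vmv_mul,
      Matrix.transpose_transpose, vmv_mul, vmv_transpose, vmv_mulVec, haa, ← hMa,
      vmv_smul_left, vmv_smul_right, vmv_smul_right, hMMt]
    have hcoef : (1:ℝ) - 1/(1+γ)*γ - (1/(1+γ)*γ - 1/(1+γ)*(1/(1+γ)*(γ^2-1))) = 0 := by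
      field_simp; ring
    match_scalars <;> field_simp <;> ring
  -- block identities
  have hbD : (Matrix.of fun _ j => b j : Matrix Unit (Fin 3) ℝ) * D = Matrix.of fun _ j => a j := by
    ext u j
    have h := congrFun hDtb j
    simp only [Matrix.mulVec, dotProduct, Matrix.transpose_apply] at h
    simp only [Matrix.mul_apply, Matrix.of_apply]
    rw [← h]
    exact Finset.sum_congr rfl fun k _ => by ring
  have hblk22 : (1 + (1/(1+γ)) • vecMulVec b b) * D = M := by
    rw [Matrix.add_mul, Matrix.one_mul, Matrix.smul_mul, vmv_mul, hDtb, hD]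
    module
  -- L = B * R
  have hLBR : L = B * R := by
    rw [hL, hB, hR, Matrix.fromBlocks_multiply]
    simp only [Matrix.mul_one, Matrix.mul_zero, zero_add, add_zero, hbD, hblk22]
  -- Bᵀ = B
  have hBt : Bᵀ = B := by
    rw [hB, Matrix.fromBlocks_transpose, Matrix.transpose_add, Matrix.transpose_one,
      Matrix.transpose_smul, vmv_transpose]
    congr 1 <;> ext i j <;> simp
  -- PosDef
  have hBpd : B.PosDef := by
    rw [Matrix.posDef_iff_dotProduct_mulVec]
    constructor
    · show Bᴴ = B
      have : Bᴴ = Bᵀ := by ext i j; simp [Matrix.conjTranspose_apply]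
      rw [this, hBt]
    · intro x hx
      rw [star_trivial]
      set t := x (Sum.inl ()) with htdef
      set v : Fin 3 → ℝ := fun i => x (Sum.inr i) with hvdef
      have hx' : x = Sum.elim (fun _ => t) v := by
        funext z
        rcases z with z | i
        · cases z; rfl
        · rfl
      rw [hx', hB, Matrix.fromBlocks_mulVec, sumElim_dotProduct_sumElim]
      set s : ℝ := b ⬝ᵥ v with hsdef
      set P : ℝ := v ⬝ᵥ v with hPdef
      have hPnn : 0 ≤ P := Finset.sum_nonneg fun i _ => mul_self_nonneg _
      have hCS : s^2 ≤ (γ^2 - 1) * P := by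
        have h := Finset.sum_mul_sq_le_sq_mul_sq Finset.univ b v
        calc s^2 = (∑ i, b i * v i)^2 := rfl
          _ ≤ (∑ i, b i ^2) * (∑ i, v i ^2) := h
          _ = (γ^2-1) * P := by rw [← hb]; simp [hPdef, dotProduct, sq]
      have hval : (fun _ => t : Unit → ℝ) ⬝ᵥ
            ((Matrix.of fun _ _ => γ : Matrix Unit Unit ℝ) *ᵥ (fun _ => t)
              + (Matrix.of fun _ j => b j : Matrix Unit (Fin 3) ℝ) *ᵥ v)
          + v ⬝ᵥ ((Matrix.of fun i _ => b i : Matrix (Fin 3) Unit ℝ) *ᵥ (fun _ => t)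
            + (1 + (1/(1+γ)) • vecMulVec b b) *ᵥ v)
          = γ*t^2 + 2*t*s + P + (1/(1+γ))*s^2 := by
        rw [Matrix.add_mulVec, Matrix.one_mulVec, Matrix.smul_mulVec,
          vmv_mulVec, ← hsdef]
        simp only [dotProduct_add, Matrix.mulVec, dotProduct, Matrix.of_apply,
          Pi.add_apply, Pi.smul_apply, smul_eq_mul, Finset.univ_unique, Finset.sum_singleton,
          PUnit.default_eq_unit]
        have e1 : ∑ x, v x * (b x * t + (v x + 1/(1+γ) * (s * b x)))
            = t * (∑ x, b x * v x) + (∑ x, v x * v x) + 1/(1+γ) * s * (∑ x, b x * v x) := by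
          rw [Finset.mul_sum, Finset.mul_sum, ← Finset.sum_add_distrib, ← Finset.sum_add_distrib]
          exact Finset.sum_congr rfl fun k _ => by ring
        rw [e1, show (∑ x, b x * v x) = s from rfl, show (∑ x, v x * v x) = P from rfl]
        ring
      simp only [Sum.elim_comp_inl, Sum.elim_comp_inr]
      rw [hval]
      by_cases hv0 : v = 0
      · have ht0 : t ≠ 0 := by
          intro h0
          apply hx
          rw [hx', hv0, h0]
          funext z; rcases z with z | i <;> simp
        have hs0 : s = 0 := by rw [hsdef, hv0]; simp
        have hP0 : P = 0 := by rw [hPdef, hv0]; simp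
        rw [hs0, hP0]
        have : 0 < t^2 := by positivity
        nlinarith
      · have hP : 0 < P := by
          obtain ⟨i, hi⟩ := Function.ne_iff.mp hv0
          have : (0:ℝ) < v i * v i := mul_self_pos.mpr hi
          exact Finset.sum_pos' (fun j _ => mul_self_nonneg _) ⟨i, Finset.mem_univ i, this⟩
        rw [show γ*t^2 + 2*t*s + P + (1/(1+γ))*s^2
            = ((1+γ)*(γ*t^2 + 2*t*s + P) + s^2)/(1+γ) from by field_simp]
        apply div_pos _ h1γ
        nlinarith [sq_nonneg (γ*t + s), mul_nonneg (le_of_lt hγ) (sq_nonneg (γ*t+s))]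
  refine ⟨hLBR, hBt, hBpd, hDa, hDDt, ?_⟩
  intro hdet
  have hdR : R.det = D.det := by
    rw [hR, Matrix.det_fromBlocks_zero₂₁, Matrix.det_one, one_mul]
  have hBRdet : B.det * D.det = 1 := by
    rw [← hdR, ← Matrix.det_mul, ← hLBR, hdet]
  have hBpos : 0 < B.det := hBpd.det_pos
  have hd2 : D.det * D.det = 1 := by
    have h := congrArg Matrix.det hDDt
    rwa [Matrix.det_mul, Matrix.det_transpose, Matrix.det_one] at h
  rcases mul_self_eq_one_iff.mp hd2 with h | h
  · exact h
  · exfalso; rw [h] at hBRdet; nlinarith
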